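/- Let Γ < SL(ℝ^{d+1}) divide the cone C over Ω, acting dually and cocompactly on Ω*, and let τ be a cocycle with equivalence condition (*): s(y) = (ω_C(y)/ω_C(γ^{−1}*y)) s(γ^{−1}*y) + τ(γ)·(y,−1). If s and s' are two τ-equivariant continuous functions on Ω* and s extends continuously to g on ∂Ω*, then s' also extends continuously to the same boundary function g. -/

import Mathlib

open Filter Topology

noncomputable section

/-- `liftV x c = (x, c) ∈ ℝ^{d+1}`. -/
def liftV {d : ℕ} (x : EuclideanSpace ℝ (Fin d)) (c : ℝ) : EuclideanSpace ℝ (Fin (d + 1)) :=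
  WithLp.toLp 2 (fun i : Fin (d + 1) => if h : (i : ℕ) < d then x ⟨i, h⟩ else c)

/-- Projection of `ℝ^{d+1}` to the first `d` coordinates. -/
def projV {d : ℕ} (X : EuclideanSpace ℝ (Fin (d + 1))) : EuclideanSpace ℝ (Fin d) :=
  WithLp.toLp 2 (fun i : Fin d => X ⟨i, by omega⟩)

/-- Last coordinate of a vector of `ℝ^{d+1}`. -/
def lastV {d : ℕ} (X : EuclideanSpace ℝ (Fin (d + 1))) : ℝ := X ⟨d, by omega⟩

/-- The open cone `C = {t(x,1) : x ∈ Ω, t > 0}` over `Ω ⊂ ℝ^d`. -/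
def coneOverV {d : ℕ} (Ω : Set (EuclideanSpace ℝ (Fin d))) :
    Set (EuclideanSpace ℝ (Fin (d + 1))) :=
  {X | ∃ x ∈ Ω, ∃ t : ℝ, 0 < t ∧ X = t • liftV x 1}

/-- The dual convex body `Ω* = {y : x·y < 1 for all x ∈ cl Ω}`. -/
def dualBody {d : ℕ} (Ω : Set (EuclideanSpace ℝ (Fin d))) :
    Set (EuclideanSpace ℝ (Fin d)) :=
  {y | ∀ x ∈ closure Ω, (inner ℝ x y : ℝ) < 1}

/-- The dual (inverse-transpose) action `γ ⋆ Y = γ^{-⊤} Y` of a linear automorphism. -/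
def starAct {d : ℕ} (γ : EuclideanSpace ℝ (Fin (d + 1)) ≃ₗ[ℝ] EuclideanSpace ℝ (Fin (d + 1)))
    (Y : EuclideanSpace ℝ (Fin (d + 1))) : EuclideanSpace ℝ (Fin (d + 1)) :=
  LinearMap.adjoint γ.symm.toLinearMap Y

/-- Dual projective action on the affine chart `Ω*`. -/
def dpact {d : ℕ} (γ : EuclideanSpace ℝ (Fin (d + 1)) ≃ₗ[ℝ] EuclideanSpace ℝ (Fin (d + 1)))
    (y : EuclideanSpace ℝ (Fin d)) : EuclideanSpace ℝ (Fin d) :=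
  (-(lastV (starAct γ (liftV y (-1)))))⁻¹ • projV (starAct γ (liftV y (-1)))

/-- A function `s` on `Ω*` is `τ`-equivariant (condition (*) of the article):
`s(y) = (ω(y)/ω(γ⁻¹*y)) s(γ⁻¹*y) + τ(γ)·(y,−1)`. -/
def TauEquivariant {d : ℕ}
    (Γ : Subgroup (EuclideanSpace ℝ (Fin (d + 1)) ≃ₗ[ℝ] EuclideanSpace ℝ (Fin (d + 1))))
    (Ωs : Set (EuclideanSpace ℝ (Fin d)))
    (ω : EuclideanSpace ℝ (Fin d) → ℝ)
    (τ : (EuclideanSpace ℝ (Fin (d + 1)) ≃ₗ[ℝ] EuclideanSpace ℝ (Fin (d + 1))) →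
      EuclideanSpace ℝ (Fin (d + 1)))
    (s : EuclideanSpace ℝ (Fin d) → ℝ) : Prop :=
  ∀ γ ∈ Γ, ∀ y ∈ Ωs,
    s y = (ω y / ω (dpact γ⁻¹ y)) * s (dpact γ⁻¹ y) + (inner ℝ (τ γ) (liftV y (-1)) : ℝ)

/-- Let `Γ < SL(ℝ^{d+1})` divide the cone `C` over `Ω`, acting dually and
cocompactly on `Ω*`, and let `τ` be a cocycle. If `s` and `s'` are two `τ`-equivariant
continuous functions on `Ω*` and `s` extends continuously to `g` on `∂Ω*`, then `s'` also
extends continuously to the same boundary function `g`. -/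
theorem tau_equivariant_functions_same_boundary_extension {d : ℕ}
    (Ω : Set (EuclideanSpace ℝ (Fin d)))
    (hΩb : Bornology.IsBounded Ω) (hΩo : IsOpen Ω) (hΩc : Convex ℝ Ω)
    (hΩ0 : (0 : EuclideanSpace ℝ (Fin d)) ∈ Ω)
    (Γ : Subgroup (EuclideanSpace ℝ (Fin (d + 1)) ≃ₗ[ℝ] EuclideanSpace ℝ (Fin (d + 1))))
    (hSL : ∀ γ ∈ Γ, LinearMap.det
      (γ : EuclideanSpace ℝ (Fin (d + 1)) ≃ₗ[ℝ] EuclideanSpace ℝ (Fin (d + 1))).toLinearMap = 1)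
    (hpres : ∀ γ ∈ Γ, (⇑γ) '' coneOverV Ω = coneOverV Ω)
    (hact : ∀ γ ∈ Γ, ∀ y ∈ dualBody Ω, dpact γ y ∈ dualBody Ω)
    (hcc : ∃ L, IsCompact L ∧ L ⊆ dualBody Ω ∧ ∀ y ∈ dualBody Ω, ∃ γ ∈ Γ, dpact γ y ∈ L)
    -- the affine-sphere support function `ω_C`
    (ω : EuclideanSpace ℝ (Fin d) → ℝ)
    (hωcont : ContinuousOn ω (dualBody Ω)) (hωconv : ConvexOn ℝ (dualBody Ω) ω)
    (hωneg : ∀ y ∈ dualBody Ω, ω y < 0)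
    (hω0 : ∀ y₀ ∈ frontier (dualBody Ω), Tendsto ω (𝓝[dualBody Ω] y₀) (𝓝 0))
    -- the cocycle
    (τ : (EuclideanSpace ℝ (Fin (d + 1)) ≃ₗ[ℝ] EuclideanSpace ℝ (Fin (d + 1))) →
      EuclideanSpace ℝ (Fin (d + 1)))
    (hτ : ∀ α ∈ Γ, ∀ β ∈ Γ, τ (α * β) = τ α + α (τ β))
    -- the two equivariant functions and the boundary function
    (s s' : EuclideanSpace ℝ (Fin d) → ℝ)
    (hscont : ContinuousOn s (dualBody Ω)) (hs'cont : ContinuousOn s' (dualBody Ω))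
    (hseq : TauEquivariant Γ (dualBody Ω) ω τ s)
    (hs'eq : TauEquivariant Γ (dualBody Ω) ω τ s')
    (g : EuclideanSpace ℝ (Fin d) → ℝ)
    (hsg : ∀ y₀ ∈ frontier (dualBody Ω), Tendsto s (𝓝[dualBody Ω] y₀) (𝓝 (g y₀))) :
    ∀ y₀ ∈ frontier (dualBody Ω), Tendsto s' (𝓝[dualBody Ω] y₀) (𝓝 (g y₀)) := by
  intro y₀ hy₀
  obtain ⟨L, hLc, hL, hLcc⟩ := hcc
  -- bound on the invariant quotient over L
  have hq : ContinuousOn (fun z => (s z - s' z) / ω z) (dualBody Ω) :=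
    (hscont.sub hs'cont).div hωcont (fun z hz => (hωneg z hz).ne)
  obtain ⟨C, hC⟩ := hLc.exists_bound_of_continuousOn (hq.mono hL)
  -- pointwise bound |s y - s' y| ≤ C * |ω y| on Ω*
  have key : ∀ y ∈ dualBody Ω, |s y - s' y| ≤ C * |ω y| := by
    intro y hy
    obtain ⟨γ, hγ, hz⟩ := hLcc y hy
    set z := dpact γ y with hzdef
    have hzΩ : z ∈ dualBody Ω := hL hz
    have h1 := hseq γ⁻¹ (inv_mem hγ) y hy
    have h2 := hs'eq γ⁻¹ (inv_mem hγ) y hy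
    rw [inv_inv] at h1 h2
    have hdiff : s y - s' y = (ω y / ω z) * (s z - s' z) := by
      rw [h1, h2]; ring
    have hωz : ω z ≠ 0 := (hωneg z hzΩ).ne
    have : |s y - s' y| = |ω y| * |(s z - s' z) / ω z| := by
      rw [hdiff, abs_mul, abs_div, abs_div]
      field_simp
    rw [this, mul_comm]
    have hb := hC z hz
    rw [Real.norm_eq_abs] at hb
    exact mul_le_mul_of_nonneg_right hb (abs_nonneg _)
  -- the difference tends to 0 at the boundary
  have hdiff0 : Tendsto (fun y => s y - s' y) (𝓝[dualBody Ω] y₀) (𝓝 0) := by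
    have hωt : Tendsto (fun y => C * |ω y|) (𝓝[dualBody Ω] y₀) (𝓝 0) := by
      have := (hω0 y₀ hy₀).abs
      rw [abs_zero] at this
      simpa using (tendsto_const_nhds.mul this : Tendsto (fun y => C * |ω y|) _ (𝓝 (C * 0)))
    refine squeeze_zero_norm' ?_ hωt
    filter_upwards [self_mem_nhdsWithin] with y hy
    simpa [Real.norm_eq_abs] using key y hy
  have := (hsg y₀ hy₀).sub hdiff0
  rw [sub_zero] at this
  simpa using this
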